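/- The pointwise product of two levees is a levee: let X be a real inner product space, let V₁, V₂ ⊆ X be finite-dimensional subspaces, and let g_i : V_i → ℂ be continuous functions vanishing at infinity (i = 1, 2). Then there exists a continuous function g : V₁ + V₂ → ℂ vanishing at infinity such that for all y ∈ X: g₁(P_{V₁} y) · g₂(P_{V₂} y) = g(P_{V₁+V₂} y). -/

import Mathlib

open Filter Topology
open scoped BoundedContinuousFunction InnerProductSpace

noncomputable section

/-- the pointwise product of two levees is a levee: if `V₁, V₂ ⊆ X` are finite
dimensional subspaces and `gᵢ ∈ C₀(Vᵢ)`, then there is a `g ∈ C₀(V₁ + V₂)` with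
`g₁(P_{V₁} y) · g₂(P_{V₂} y) = g(P_{V₁+V₂} y)` for all `y ∈ X`. -/
theorem mul_levee (X : Type*) [NormedAddCommGroup X] [InnerProductSpace ℝ X]
    (V₁ V₂ : Submodule ℝ X) [FiniteDimensional ℝ V₁] [FiniteDimensional ℝ V₂]
    (g₁ : V₁ → ℂ) (g₂ : V₂ → ℂ)
    (hc₁ : Continuous g₁) (hz₁ : Tendsto g₁ (cocompact _) (𝓝 0))
    (hc₂ : Continuous g₂) (hz₂ : Tendsto g₂ (cocompact _) (𝓝 0)) :
    ∃ g : ↥(V₁ ⊔ V₂) → ℂ, Continuous g ∧ Tendsto g (cocompact _) (𝓝 0) ∧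
      ∀ y : X, g₁ (Submodule.orthogonalProjectionOnto V₁ y) * g₂ (Submodule.orthogonalProjectionOnto V₂ y) =
        g (Submodule.orthogonalProjectionOnto (V₁ ⊔ V₂) y) := by
  set V := V₁ ⊔ V₂ with hV
  haveI : FiniteDimensional ℝ V := Submodule.finiteDimensional_sup V₁ V₂
  -- the restriction of the pair of projections to V, as a linear map
  set L : V →ₗ[ℝ] V₁ × V₂ :=
    (((Submodule.orthogonalProjectionOnto V₁).toLinearMap.comp V.subtype).prod
      ((Submodule.orthogonalProjectionOnto V₂).toLinearMap.comp V.subtype)) with hL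
  have hLapply : ∀ v : V, L v = (Submodule.orthogonalProjectionOnto V₁ (v : X), Submodule.orthogonalProjectionOnto V₂ (v : X)) :=
    fun v => rfl
  have hker : LinearMap.ker L = ⊥ := by
    rw [LinearMap.ker_eq_bot']
    intro v hv
    have h1 : Submodule.orthogonalProjectionOnto V₁ (v : X) = 0 := congrArg Prod.fst hv
    have h2 : Submodule.orthogonalProjectionOnto V₂ (v : X) = 0 := congrArg Prod.snd hv
    rw [Submodule.orthogonalProjectionOnto_eq_zero_iff] at h1 h2
    have hmem : (v : X) ∈ Vᗮ := by
      show (v : X) ∈ (V₁ ⊔ V₂)ᗮ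
      rw [← Submodule.inf_orthogonal]
      exact ⟨h1, h2⟩
    have : (v : X) ∈ V ⊓ Vᗮ := ⟨v.2, hmem⟩
    rw [Submodule.inf_orthogonal_eq_bot] at this
    exact Subtype.ext (by simpa using this)
  obtain ⟨K, hK0, hKanti⟩ := L.exists_antilipschitzWith hker
  have hLcont : Continuous L := L.continuous_of_finiteDimensional
  have hLcocompact : Tendsto L (cocompact V) (cocompact (V₁ × V₂)) :=
    (hKanti.isClosedEmbedding (LinearMap.toContinuousLinearMap L).uniformContinuous).tendsto_cocompact
  -- bound for g₂ and g₁
  set G₁ : ZeroAtInftyContinuousMap V₁ ℂ := ⟨⟨g₁, hc₁⟩, hz₁⟩ with hG₁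
  set G₂ : ZeroAtInftyContinuousMap V₂ ℂ := ⟨⟨g₂, hc₂⟩, hz₂⟩ with hG₂
  have hb₁ : ∀ x, ‖g₁ x‖ ≤ ‖G₁.toBCF‖ := fun x => G₁.toBCF.norm_coe_le_norm x
  have hb₂ : ∀ x, ‖g₂ x‖ ≤ ‖G₂.toBCF‖ := fun x => G₂.toBCF.norm_coe_le_norm x
  -- the product function on V₁ × V₂ vanishes at infinity
  have hprod : Tendsto (fun p : V₁ × V₂ => g₁ p.1 * g₂ p.2) (cocompact (V₁ × V₂)) (𝓝 0) := by
    rw [← Filter.coprod_cocompact, Filter.coprod]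
    rw [tendsto_sup]
    constructor
    · have h : Tendsto (fun p : ↥V₁ × ↥V₂ => g₁ p.1)
          (Filter.comap Prod.fst (cocompact ↥V₁)) (𝓝 0) := hz₁.comp tendsto_comap
      refine h.zero_mul_isBoundedUnder_le ?_
      exact Filter.isBoundedUnder_of ⟨‖G₂.toBCF‖, fun p => hb₂ p.2⟩
    · have h : Tendsto (fun p : ↥V₁ × ↥V₂ => g₂ p.2)
          (Filter.comap Prod.snd (cocompact ↥V₂)) (𝓝 0) := hz₂.comp tendsto_comap
      have h2 : Tendsto (fun p : ↥V₁ × ↥V₂ => g₂ p.2 * g₁ p.1)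
          (Filter.comap Prod.snd (cocompact ↥V₂)) (𝓝 0) :=
        h.zero_mul_isBoundedUnder_le (Filter.isBoundedUnder_of ⟨‖G₁.toBCF‖, fun p => hb₁ p.1⟩)
      simpa [mul_comm] using h2
  refine ⟨fun v => g₁ (Submodule.orthogonalProjectionOnto V₁ (v : X)) * g₂ (Submodule.orthogonalProjectionOnto V₂ (v : X)),
    ?_, ?_, ?_⟩
  · exact (hc₁.comp ((Submodule.orthogonalProjectionOnto V₁).continuous.comp continuous_subtype_val)).mul
      (hc₂.comp ((Submodule.orthogonalProjectionOnto V₂).continuous.comp continuous_subtype_val))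
  · have := hprod.comp hLcocompact
    simpa [Function.comp_def, hLapply] using this
  · intro y
    have h1 : Submodule.orthogonalProjectionOnto V₁ ((Submodule.orthogonalProjectionOnto V y : X)) =
        Submodule.orthogonalProjectionOnto V₁ y :=
      Submodule.orthogonalProjectionOnto_starProjection_of_le le_sup_left y
    have h2 : Submodule.orthogonalProjectionOnto V₂ ((Submodule.orthogonalProjectionOnto V y : X)) =
        Submodule.orthogonalProjectionOnto V₂ y :=
      Submodule.orthogonalProjectionOnto_starProjection_of_le le_sup_right y
    rw [← h1, ← h2]
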